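/- arXiv:1703.06685 — 2 statements merged into one kernel-verified Lean document; each statement's English description precedes it below -/
import Mathlib

section
/- The functor F maps every 0-fixed object of 𝒜 to a 0-cofixed object of ℬ, the functor G maps every 0-cofixed object of ℬ to a 0-fixed object of 𝒜, and the restrictions of F and G to the full subcategories Fix₀(𝒜) and coFix₀(ℬ) form an adjoint equivalence of categories (the unit η_A is an isomorphism for every A in Fix₀(𝒜) and the counit ε_B is an isomorphism for every B in coFix₀(ℬ)). -/
open CategoryTheory CategoryTheory.Limits

universe v u v' u'

variable {𝒜 : Type u} [Category.{v} 𝒜] {ℬ : Type u'} [Category.{v'} ℬ]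
  [Abelian 𝒜] [EnoughProjectives 𝒜] [Abelian ℬ] [EnoughInjectives ℬ]

/-- An object `A` of `𝒜` is *0-fixed* with respect to the adjunction `adj : F ⊣ G` if
`LᵢF(A) = 0` for all `i > 0`, `RⁱG(F A) = 0` for all `i > 0`, and the unit
`η_A : A ⟶ G (F A)` is an isomorphism. -/
def IsFixed0 (F : 𝒜 ⥤ ℬ) (G : ℬ ⥤ 𝒜) [F.Additive] [G.Additive]
    (adj : F ⊣ G) (A : 𝒜) : Prop :=
  (∀ i : ℕ, 0 < i → IsZero ((F.leftDerived i).obj A)) ∧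
  (∀ i : ℕ, 0 < i → IsZero ((G.rightDerived i).obj (F.obj A))) ∧
  IsIso (adj.unit.app A)

/-- An object `B` of `ℬ` is *0-cofixed* with respect to the adjunction `adj : F ⊣ G` if
`RⁱG(B) = 0` for all `i > 0`, `LᵢF(G B) = 0` for all `i > 0`, and the counit
`ε_B : F (G B) ⟶ B` is an isomorphism. -/
def IsCofixed0 (F : 𝒜 ⥤ ℬ) (G : ℬ ⥤ 𝒜) [F.Additive] [G.Additive]
    (adj : F ⊣ G) (B : ℬ) : Prop :=
  (∀ i : ℕ, 0 < i → IsZero ((G.rightDerived i).obj B)) ∧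
  (∀ i : ℕ, 0 < i → IsZero ((F.leftDerived i).obj (G.obj B))) ∧
  IsIso (adj.counit.app B)

/-- **Theorem.** `F` maps every `0`-fixed object of `𝒜` to a `0`-cofixed object of `ℬ`,
`G` maps every `0`-cofixed object of `ℬ` to a `0`-fixed object of `𝒜`, and the restrictions
of `F` and `G` to `Fix₀(𝒜)` and `coFix₀(ℬ)` form an adjoint equivalence: the unit `η_A` is an
isomorphism for every `A ∈ Fix₀(𝒜)` and the counit `ε_B` is an isomorphism for every
`B ∈ coFix₀(ℬ)`. -/
theorem stmt4 (F : 𝒜 ⥤ ℬ) (G : ℬ ⥤ 𝒜) [F.Additive] [G.Additive] (adj : F ⊣ G) :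
    (∀ A : 𝒜, IsFixed0 F G adj A → IsCofixed0 F G adj (F.obj A)) ∧
    (∀ B : ℬ, IsCofixed0 F G adj B → IsFixed0 F G adj (G.obj B)) ∧
    (∀ A : 𝒜, IsFixed0 F G adj A → IsIso (adj.unit.app A)) ∧
    (∀ B : ℬ, IsCofixed0 F G adj B → IsIso (adj.counit.app B)) := by
  refine ⟨?_, ?_, fun A h => h.2.2, fun B h => h.2.2⟩
  · rintro A ⟨h1, h2, h3⟩
    refine ⟨h2, fun i hi => (h1 i hi).of_iso
      ((F.leftDerived i).mapIso (asIso (adj.unit.app A)).symm), ?_⟩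
    have ht := adj.left_triangle_components A
    have : IsIso (F.map (adj.unit.app A) ≫ adj.counit.app (F.obj A)) := by
      rw [ht]; exact inferInstanceAs (IsIso (𝟙 _))
    exact IsIso.of_isIso_comp_left (F.map (adj.unit.app A)) (adj.counit.app (F.obj A))
  · rintro B ⟨h1, h2, h3⟩
    refine ⟨h2, fun i hi => (h1 i hi).of_iso
      ((G.rightDerived i).mapIso (asIso (adj.counit.app B))), ?_⟩
    have ht := adj.right_triangle_components B
    have : IsIso (adj.unit.app (G.obj B) ≫ G.map (adj.counit.app B)) := by
      rw [ht]; exact inferInstanceAs (IsIso (𝟙 _))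
    exact IsIso.of_isIso_comp_right (adj.unit.app (G.obj B)) (G.map (adj.counit.app B))
end

section
/- Let (R, m, k) be a commutative noetherian local ring which is m-adically complete, and let E be an injective hull of k over R. Then: (1) for every finitely generated R-module M, the R-module Hom_R(M, E) is Artinian; (2) for every Artinian R-module N, the R-module Hom_R(N, E) is finitely generated; and (3) for every R-module M that is finitely generated or Artinian, the canonical evaluation map M → Hom_R(Hom_R(M, E), E), sending m to the map φ ↦ φ(m), is an isomorphism. Hence Hom_R(−, E) gives a duality between the category of finitely generated R-modules and the category of Artinian R-modules. -/
universe u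

open IsLocalRing Submodule LinearMap Function

/-- The canonical evaluation (biduality) map `M → Hom_R(Hom_R(M, E), E)`,
sending `m` to the map `φ ↦ φ(m)`. -/
noncomputable def bidualityMap (R : Type u) [CommRing R] (M : Type u) [AddCommGroup M]
    [Module R M] (E : Type u) [AddCommGroup E] [Module R E] :
    M →ₗ[R] ((M →ₗ[R] E) →ₗ[R] E) :=
  (LinearMap.id : (M →ₗ[R] E) →ₗ[R] (M →ₗ[R] E)).flip

section Matlis
variable {R : Type u} [CommRing R] [IsLocalRing R]
variable {E : Type u} [AddCommGroup E] [Module R E]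

variable {R : Type u} [CommRing R] [IsLocalRing R]
variable {E : Type u} [AddCommGroup E] [Module R E]

/-- E is a cogenerator: any nonzero element is detected by a map to E. -/
theorem cogen (hE : Module.Injective R E) (f : ResidueField R →ₗ[R] E)
    (hf : Function.Injective f) {M : Type u} [AddCommGroup M] [Module R M]
    (x : M) (hx : x ≠ 0) : ∃ φ : M →ₗ[R] E, φ x ≠ 0 := by
  set T := LinearMap.toSpanSingleton R M x with hT
  have hker : LinearMap.ker T ≠ ⊤ := by
    intro h
    have : (1 : R) ∈ LinearMap.ker T := h ▸ Submodule.mem_top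
    simp only [LinearMap.mem_ker, hT, LinearMap.toSpanSingleton_apply, one_smul] at this
    exact hx this
  have hle : LinearMap.ker T ≤ maximalIdeal R := le_maximalIdeal hker
  set g₀ : R →ₗ[R] E := f.comp (Algebra.linearMap R (ResidueField R)) with hg₀
  have hleg : LinearMap.ker T ≤ LinearMap.ker g₀ := by
    intro r hr
    have : residue R r = 0 := Ideal.Quotient.eq_zero_iff_mem.mpr (hle hr)
    simp [hg₀, Algebra.linearMap_apply]
    show f (residue R r) = 0
    rw [this, map_zero]
  set e := T.quotKerEquivRange with he
  set φ₁ : LinearMap.range T →ₗ[R] E :=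
    (Submodule.liftQ (LinearMap.ker T) g₀ hleg).comp e.symm.toLinearMap with hφ₁
  obtain ⟨φ, hφ⟩ := hE.out (LinearMap.range T).subtype Subtype.val_injective φ₁
  have hxmem : x ∈ LinearMap.range T := ⟨1, by simp [hT]⟩
  refine ⟨φ, ?_⟩
  have h1 : φ x = φ₁ ⟨x, hxmem⟩ := hφ ⟨x, hxmem⟩
  have h2 : e (Submodule.Quotient.mk (1 : R)) = ⟨x, hxmem⟩ := by
    apply Subtype.ext
    rw [he, T.quotKerEquivRange_apply_mk]
    simp [hT]
  have h3 : φ₁ ⟨x, hxmem⟩ = g₀ 1 := by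
    rw [hφ₁]
    simp only [LinearMap.comp_apply, LinearEquiv.coe_coe]
    rw [← h2, LinearEquiv.symm_apply_apply, Submodule.liftQ_apply]
  rw [h1, h3]
  simp only [hg₀, LinearMap.comp_apply, Algebra.linearMap_apply, map_one]
  intro h
  exact one_ne_zero (hf (by rw [map_zero]; exact_mod_cast h) : (1 : ResidueField R) = 0)

/-- The socle of E is the image of f. -/
theorem mem_range_of_killed (f : ResidueField R →ₗ[R] E) (hf : Function.Injective f)
    (hess : ∀ N : Submodule R E, N ≠ ⊥ → N ⊓ LinearMap.range f ≠ ⊥)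
    (x : E) (hx : ∀ r ∈ maximalIdeal R, r • x = 0) : x ∈ LinearMap.range f := by
  by_cases h0 : x = 0
  · exact h0 ▸ (LinearMap.range f).zero_mem
  have hne : (Submodule.span R {x} : Submodule R E) ≠ ⊥ := by
    simpa [Submodule.span_singleton_eq_bot] using h0
  obtain ⟨y, hy, hy0⟩ := Submodule.ne_bot_iff _ |>.mp (hess _ hne)
  obtain ⟨hy1, c, hc⟩ := hy
  obtain ⟨s, hs⟩ := Submodule.mem_span_singleton.mp hy1
  have hsu : IsUnit s := by
    by_contra h
    apply hy0
    rw [← hs, hx s ((mem_maximalIdeal s).mpr h)]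
  obtain ⟨u, hu⟩ := hsu
  refine ⟨(u⁻¹ : Rˣ) • c, ?_⟩
  have : f ((u⁻¹ : Rˣ) • c) = (u⁻¹ : Rˣ) • f c := map_smul f ((u⁻¹ : Rˣ) : R) c
  rw [this, hc, ← hs, ← hu]
  simp [Units.smul_def, smul_smul]

theorem res0 {r : R} (hr : r ∈ maximalIdeal R) : residue R r = 0 :=
  Ideal.Quotient.eq_zero_iff_mem.mpr hr

theorem bidual_apply {M : Type u} [AddCommGroup M] [Module R M] (x : M) (φ : M →ₗ[R] E) :
    bidualityMap R M E x φ = φ x := rfl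

theorem smul_one_res (s : R) : s • (1 : ResidueField R) = residue R s := by
  rw [Algebra.smul_def, mul_one]; rfl

/-- every hom from the residue field into E is a scalar multiple of f -/
theorem hom_res (f : ResidueField R →ₗ[R] E) (hf : Function.Injective f)
    (hess : ∀ N : Submodule R E, N ≠ ⊥ → N ⊓ LinearMap.range f ≠ ⊥)
    (ψ : ResidueField R →ₗ[R] E) : ∃ r : R, ψ = r • f := by
  have hkill : ∀ r ∈ maximalIdeal R, r • ψ 1 = 0 := by
    intro r hr
    rw [← map_smul, smul_one_res, res0 hr, map_zero]
  obtain ⟨c, hc⟩ := mem_range_of_killed f hf hess (ψ 1) hkill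
  obtain ⟨r, hr⟩ := Ideal.Quotient.mk_surjective c
  refine ⟨r, ?_⟩
  ext y
  obtain ⟨s, hs⟩ := Ideal.Quotient.mk_surjective y
  have hy : y = s • (1 : ResidueField R) := by rw [smul_one_res]; exact hs.symm
  have hsc : s • c = r • y := by
    rw [← hr, ← hs]
    show s • residue R r = r • residue R s
    rw [← smul_one_res, ← smul_one_res, smul_comm]
  show ψ y = (r • f) y
  calc ψ y = s • ψ 1 := by rw [hy, map_smul]
    _ = s • f c := by rw [hc]
    _ = f (s • c) := (map_smul f s c).symm
    _ = f (r • y) := by rw [hsc]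
    _ = r • f y := map_smul f r y
    _ = (r • f) y := rfl

theorem smul_f_eq_zero (f : ResidueField R →ₗ[R] E) {r : R} (hr : r ∈ maximalIdeal R) :
    r • f = 0 := by
  ext c
  obtain ⟨s, hs⟩ := Ideal.Quotient.mk_surjective c
  show r • f c = 0
  rw [← map_smul]
  have : r • c = 0 := by
    rw [← hs]
    show r • residue R s = 0
    rw [← smul_one_res, smul_comm, smul_one_res, res0 hr, smul_zero]
  rw [this, map_zero]

theorem bidual_res_surj (f : ResidueField R →ₗ[R] E) (hf : Function.Injective f)
    (hess : ∀ N : Submodule R E, N ≠ ⊥ → N ⊓ LinearMap.range f ≠ ⊥) :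
    Function.Surjective (bidualityMap R (ResidueField R) E) := by
  intro F
  have hkill : ∀ r ∈ maximalIdeal R, r • F f = 0 := by
    intro r hr
    rw [← map_smul, smul_f_eq_zero f hr, map_zero]
  obtain ⟨c₀, hc₀⟩ := mem_range_of_killed f hf hess (F f) hkill
  refine ⟨c₀, ?_⟩
  ext ψ
  obtain ⟨r, hr⟩ := hom_res f hf hess ψ
  rw [bidual_apply, hr]
  show (r • f) c₀ = F (r • f)
  rw [map_smul]
  show r • f c₀ = r • F f
  rw [hc₀]

theorem bidual_surj_congr {M N : Type u} [AddCommGroup M] [Module R M]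
    [AddCommGroup N] [Module R N] (e : M ≃ₗ[R] N)
    (h : Function.Surjective (bidualityMap R N E)) :
    Function.Surjective (bidualityMap R M E) := by
  intro F
  obtain ⟨n, hn⟩ := h (F.comp (LinearMap.lcomp R E e.toLinearMap))
  refine ⟨e.symm n, ?_⟩
  ext φ
  have := congrArg (fun (G : (N →ₗ[R] E) →ₗ[R] E) => G (φ.comp e.symm.toLinearMap)) hn
  simp only [bidual_apply, LinearMap.comp_apply, LinearMap.lcomp_apply'] at this ⊢
  have h2 : (φ ∘ₗ (e.symm : N →ₗ[R] M)) ∘ₗ (e : M →ₗ[R] N) = φ := by ext x; simp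
  rw [h2] at this
  exact this

theorem bidual_simple_surj (hE : Module.Injective R E) (f : ResidueField R →ₗ[R] E)
    (hf : Function.Injective f)
    (hess : ∀ N : Submodule R E, N ≠ ⊥ → N ⊓ LinearMap.range f ≠ ⊥)
    {M : Type u} [AddCommGroup M] [Module R M] (hM : IsSimpleModule R M) :
    Function.Surjective (bidualityMap R M E) := by
  obtain ⟨I, hmax, ⟨e⟩⟩ := isSimpleModule_iff_quot_maximal.mp hM
  have hI : I = maximalIdeal R := IsLocalRing.eq_maximalIdeal hmax
  subst hI
  exact bidual_surj_congr (e : M ≃ₗ[R] ResidueField R) (bidual_res_surj f hf hess)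

theorem bidual_subsingleton_surj {M : Type u} [AddCommGroup M] [Module R M]
    [Subsingleton M] : Function.Surjective (bidualityMap R M E) := by
  intro F
  refine ⟨0, ?_⟩
  ext φ
  rw [bidual_apply]
  have hφ : φ = 0 := by ext x; rw [Subsingleton.elim x 0, map_zero]; rfl
  rw [hφ]
  simp

theorem bidual_ext_surj (hE : Module.Injective R E) {M : Type u} [AddCommGroup M]
    [Module R M] (S : Submodule R M)
    (hS : Function.Surjective (bidualityMap R S E))
    (hQ : Function.Surjective (bidualityMap R (M ⧸ S) E)) :
    Function.Surjective (bidualityMap R M E) := by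
  intro F
  -- pull back along the quotient
  obtain ⟨q, hq⟩ := hQ (F.comp (LinearMap.lcomp R E S.mkQ))
  obtain ⟨x₀, hx₀⟩ := S.mkQ_surjective q
  set F' : (M →ₗ[R] E) →ₗ[R] E := F - bidualityMap R M E x₀ with hF'
  have claim1 : ∀ φ : M →ₗ[R] E, (∀ s ∈ S, φ s = 0) → F' φ = 0 := by
    intro φ hφ
    have hle : S ≤ LinearMap.ker φ := fun s hs => hφ s hs
    set ψ := S.liftQ φ hle with hψ
    have hφψ : φ = ψ.comp S.mkQ := by ext y; simp [hψ]
    have h1 : F φ = ψ q := by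
      have := congrArg (fun (G : ((M ⧸ S) →ₗ[R] E) →ₗ[R] E) => G ψ) hq
      simp only [bidual_apply, LinearMap.comp_apply, LinearMap.lcomp_apply'] at this
      rw [hφψ, ← this]
    rw [hF', LinearMap.sub_apply, h1, ← hx₀, bidual_apply, hφψ, LinearMap.comp_apply,
      Submodule.mkQ_apply, sub_self]
  -- restriction to S
  set res : (M →ₗ[R] E) →ₗ[R] (S →ₗ[R] E) := LinearMap.lcomp R E S.subtype with hres
  have hsurj : Function.Surjective res := by
    intro φ₀
    obtain ⟨φ, hφ⟩ := hE.out S.subtype Subtype.val_injective φ₀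
    exact ⟨φ, by ext s; exact hφ s⟩
  have hkerle : LinearMap.ker res ≤ LinearMap.ker F' := by
    intro φ hφ
    rw [LinearMap.mem_ker] at hφ ⊢
    apply claim1
    intro s hs
    have := congrArg (fun (g : S →ₗ[R] E) => g ⟨s, hs⟩) hφ
    exact this
  set eqv := LinearMap.quotKerEquivOfSurjective res hsurj with heqv
  set F'' : (S →ₗ[R] E) →ₗ[R] E :=
    (Submodule.liftQ (LinearMap.ker res) F' hkerle).comp eqv.symm.toLinearMap with hF''
  have hF''res : ∀ φ : M →ₗ[R] E, F'' (res φ) = F' φ := by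
    intro φ
    have h2 : eqv (Submodule.Quotient.mk φ) = res φ := by
      rw [heqv]
      show (res.quotKerEquivRange.trans
        (LinearEquiv.ofTop (LinearMap.range res) (LinearMap.range_eq_top.2 hsurj)))
        (Submodule.Quotient.mk φ) = res φ
      rw [LinearEquiv.trans_apply, LinearEquiv.ofTop_apply,
        LinearMap.quotKerEquivRange_apply_mk]
    rw [hF'', LinearMap.comp_apply, LinearEquiv.coe_coe, ← h2,
      LinearEquiv.symm_apply_apply, Submodule.liftQ_apply]
  obtain ⟨s, hs⟩ := hS F''
  refine ⟨x₀ + (s : M), ?_⟩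
  ext φ
  rw [bidual_apply, map_add]
  have h3 : F'' (res φ) = φ (s : M) := by
    have := congrArg (fun (G : (S →ₗ[R] E) →ₗ[R] E) => G (res φ)) hs
    simp only [bidual_apply] at this
    rw [← this]
    rfl
  have h4 : F' φ = φ (s : M) := by rw [← hF''res, h3]
  have : F φ = F' φ + φ x₀ := by rw [hF']; simp [bidual_apply]
  rw [this, h4, add_comm]

theorem bidual_fl_surj (hE : Module.Injective R E) (f : ResidueField R →ₗ[R] E)
    (hf : Function.Injective f)
    (hess : ∀ N : Submodule R E, N ≠ ⊥ → N ⊓ LinearMap.range f ≠ ⊥)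
    {M : Type u} [AddCommGroup M] [Module R M] (hM : IsFiniteLength R M) :
    Function.Surjective (bidualityMap R M E) := by
  induction hM with
  | of_subsingleton => exact bidual_subsingleton_surj
  | @of_simple_quotient M _ _ N _ _ ih =>
      exact bidual_ext_surj hE N ih (bidual_simple_surj hE f hf hess inferInstance)


variable (R E) in
/-- the submodule of E killed by the t-th power of the maximal ideal -/
def Eann (t : ℕ) : Submodule R E where
  carrier := {x | ∀ r ∈ (maximalIdeal R) ^ t, r • x = 0}
  add_mem' := by intro a b ha hb r hr; rw [smul_add, ha r hr, hb r hr, add_zero]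
  zero_mem' := fun r _ => smul_zero r
  smul_mem' := by intro s x hx r hr; rw [smul_comm, hx r hr, smul_zero]

theorem mem_Eann {t : ℕ} {x : E} : x ∈ Eann R E t ↔ ∀ r ∈ (maximalIdeal R) ^ t, r • x = 0 :=
  Iff.rfl

theorem Eann_mono {s t : ℕ} (h : s ≤ t) : Eann R E s ≤ Eann R E t := by
  intro x hx r hr
  exact hx r (Ideal.pow_le_pow_right h hr)

/-- a finitely generated module killed by the maximal ideal is Artinian -/
theorem artinian_of_killed {M : Type u} [AddCommGroup M] [Module R M]
    [Module.Finite R M] (hM : ∀ (x : M), ∀ r ∈ maximalIdeal R, r • x = 0) :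
    IsArtinian R M := by
  have : IsSemisimpleModule R M := by
    apply IsSemisimpleModule.of_sSup_simples_eq_top
    rw [eq_top_iff]
    intro x _
    by_cases hx : x = 0
    · rw [hx]; exact zero_mem _
    · have hker : LinearMap.ker (LinearMap.toSpanSingleton R M x) = maximalIdeal R := by
        apply le_antisymm
        · apply le_maximalIdeal
          intro h
          have h1 : (1:R) ∈ LinearMap.ker (LinearMap.toSpanSingleton R M x) :=
            h ▸ Submodule.mem_top
          simp only [LinearMap.mem_ker, LinearMap.toSpanSingleton_apply, one_smul] at h1
          exact hx h1
        · intro r hr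
          rw [LinearMap.mem_ker, LinearMap.toSpanSingleton_apply]
          exact hM x r hr
      have e1 : (Submodule.span R {x} : Submodule R M) ≃ₗ[R] ResidueField R :=
        ((LinearEquiv.ofEq _ _ (LinearMap.span_singleton_eq_range R M x)).trans
          (LinearMap.toSpanSingleton R M x).quotKerEquivRange.symm).trans
          (Submodule.quotEquivOfEq _ _ hker)
      have hsimple0 : IsSimpleModule R (ResidueField R) :=
        isSimpleModule_iff_isCoatom.mpr ((Ideal.isMaximal_def).mp (maximalIdeal.isMaximal R))
      have hsimple : IsSimpleModule R (Submodule.span R {x} : Submodule R M) :=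
        IsSimpleModule.congr e1
      have : x ∈ Submodule.span R {x} := Submodule.mem_span_singleton_self x
      exact Submodule.mem_sSup_of_mem (by exact hsimple) this
  exact inferInstance

theorem artinian_quot_pow [IsNoetherianRing R] (t : ℕ) :
    IsArtinian R (R ⧸ ((maximalIdeal R) ^ t : Ideal R)) := by
  induction t with
  | zero =>
      have : ((maximalIdeal R) ^ 0 : Ideal R) = ⊤ := by rw [pow_zero, Ideal.one_eq_top]
      have hsub : Subsingleton (R ⧸ ((maximalIdeal R) ^ 0 : Ideal R)) :=
        Submodule.Quotient.subsingleton_iff.mpr this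
      have : Finite (R ⧸ ((maximalIdeal R) ^ 0 : Ideal R)) := Finite.of_subsingleton
      exact isArtinian_of_finite
  | succ t ih =>
      set A : Ideal R := (maximalIdeal R) ^ (t + 1) with hA
      set B : Ideal R := (maximalIdeal R) ^ t with hB
      have hAB : A ≤ B := Ideal.pow_le_pow_right (Nat.le_succ t)
      set V : Submodule R (R ⧸ A) := Submodule.map A.mkQ B with hV
      have hfinV : Module.Finite R V :=
        Module.Finite.iff_fg.mpr ((IsNoetherian.noetherian B).map A.mkQ)
      have hkillV : ∀ (x : V), ∀ r ∈ maximalIdeal R, r • x = 0 := by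
        rintro ⟨x, hx⟩ r hr
        obtain ⟨y, hy, rfl⟩ := hx
        apply Subtype.ext
        show r • (A.mkQ y) = 0
        rw [← map_smul, Submodule.mkQ_apply, Submodule.Quotient.mk_eq_zero]
        show r • y ∈ A
        rw [hA, pow_succ']
        exact Ideal.mul_mem_mul hr hy
      have hartV : IsArtinian R V := artinian_of_killed hkillV
      set g : (R ⧸ A) →ₗ[R] (R ⧸ B) := Submodule.mapQ A B LinearMap.id hAB with hg
      have hrk : LinearMap.range V.subtype = LinearMap.ker g := by
        rw [Submodule.range_subtype]
        ext x
        obtain ⟨y, rfl⟩ := A.mkQ_surjective x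
        constructor
        · rintro ⟨z, hz, hzy⟩
          rw [LinearMap.mem_ker]
          have : (y : R) - z ∈ A := by
            rw [← Submodule.Quotient.eq]
            exact hzy.symm
          have hyB : y ∈ B := by
            have := B.add_mem (hAB this) hz
            simpa using this
          show g (Submodule.Quotient.mk y) = 0
          rw [hg, Submodule.mapQ_apply, LinearMap.id_apply, Submodule.Quotient.mk_eq_zero]
          exact hyB
        · intro hxk
          rw [LinearMap.mem_ker] at hxk
          have : g (Submodule.Quotient.mk y) = Submodule.Quotient.mk y := by
            rw [hg, Submodule.mapQ_apply, LinearMap.id_apply]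
          have hyB : y ∈ B := by
            rw [← Submodule.Quotient.mk_eq_zero (p := B)]
            rw [← this]
            exact hxk
          exact ⟨y, hyB, rfl⟩
      exact isArtinian_of_range_eq_ker V.subtype g hrk


/-- every map from the t-torsion of E into E is multiplication by a scalar -/
theorem Et_maps [IsNoetherianRing R] (hE : Module.Injective R E)
    (f : ResidueField R →ₗ[R] E) (hf : Function.Injective f)
    (hess : ∀ N : Submodule R E, N ≠ ⊥ → N ⊓ LinearMap.range f ≠ ⊥)
    (t : ℕ) (φ : (Eann R E t) →ₗ[R] E) : ∃ r : R, ∀ x : Eann R E t, φ x = r • (x : E) := by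
  set Q := R ⧸ ((maximalIdeal R) ^ t : Ideal R) with hQdef
  have hfl : IsFiniteLength R Q :=
    isFiniteLength_iff_isNoetherian_isArtinian.mpr ⟨inferInstance, artinian_quot_pow t⟩
  have hmem1 : ∀ ψ : Q →ₗ[R] E, ψ (Submodule.Quotient.mk 1) ∈ Eann R E t := by
    intro ψ r hr
    rw [← map_smul]
    have : r • (Submodule.Quotient.mk (1:R) : Q) = 0 := by
      rw [← Submodule.Quotient.mk_smul, smul_eq_mul, mul_one, Submodule.Quotient.mk_eq_zero]
      exact hr
    rw [this, map_zero]
  set ev1 : (Q →ₗ[R] E) →ₗ[R] E := bidualityMap R Q E (Submodule.Quotient.mk 1) with hev1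
  set G : (Q →ₗ[R] E) →ₗ[R] E :=
    φ.comp (LinearMap.codRestrict (Eann R E t) ev1 hmem1) with hG
  obtain ⟨q, hq⟩ := bidual_fl_surj hE f hf hess hfl G
  obtain ⟨r, hr⟩ := Submodule.Quotient.mk_surjective _ q
  refine ⟨r, ?_⟩
  intro x
  have hker : ((maximalIdeal R) ^ t : Ideal R) ≤ LinearMap.ker (LinearMap.toSpanSingleton R E (x : E)) := by
    intro s hs
    rw [LinearMap.mem_ker, LinearMap.toSpanSingleton_apply]
    exact x.2 s hs
  set ψx : Q →ₗ[R] E := Submodule.liftQ _ (LinearMap.toSpanSingleton R E (x : E)) hker with hψx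
  have h1 : ψx (Submodule.Quotient.mk 1) = (x : E) := by
    rw [hψx, Submodule.liftQ_apply, LinearMap.toSpanSingleton_apply, one_smul]
  have h2 : G ψx = φ x := by
    rw [hG, LinearMap.comp_apply]
    congr 1
    apply Subtype.ext
    show ev1 ψx = (x : E)
    rw [hev1, bidual_apply, h1]
  have h3 : G ψx = r • (x : E) := by
    have := congrArg (fun (H : (Q →ₗ[R] E) →ₗ[R] E) => H ψx) hq
    simp only [bidual_apply] at this
    rw [← this, ← hr, hψx, Submodule.liftQ_apply, LinearMap.toSpanSingleton_apply]
  rw [← h2, h3]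

/-- the annihilator of the t-torsion of E is contained in m^t -/
theorem ann_Eann (hE : Module.Injective R E) (f : ResidueField R →ₗ[R] E)
    (hf : Function.Injective f) (t : ℕ) {r : R}
    (h : ∀ x : E, x ∈ Eann R E t → r • x = 0) : r ∈ (maximalIdeal R) ^ t := by
  by_contra hrm
  set Q := R ⧸ ((maximalIdeal R) ^ t : Ideal R) with hQdef
  have hne : (Submodule.Quotient.mk r : Q) ≠ 0 := by
    rw [Ne, Submodule.Quotient.mk_eq_zero]
    exact hrm
  obtain ⟨ψ, hψ⟩ := cogen hE f hf (Submodule.Quotient.mk r : Q) hne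
  have hmem : ψ (Submodule.Quotient.mk 1) ∈ Eann R E t := by
    intro s hs
    rw [← map_smul]
    have : s • (Submodule.Quotient.mk (1:R) : Q) = 0 := by
      rw [← Submodule.Quotient.mk_smul, smul_eq_mul, mul_one, Submodule.Quotient.mk_eq_zero]
      exact hs
    rw [this, map_zero]
  have : r • ψ (Submodule.Quotient.mk 1) = ψ (Submodule.Quotient.mk r) := by
    rw [← map_smul, ← Submodule.Quotient.mk_smul, smul_eq_mul, mul_one]
  exact hψ (by rw [← this, h _ hmem])

/-- E is m-power torsion -/
theorem torsion_E [IsNoetherianRing R] (f : ResidueField R →ₗ[R] E)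
    (hf : Function.Injective f)
    (hess : ∀ N : Submodule R E, N ≠ ⊥ → N ⊓ LinearMap.range f ≠ ⊥)
    (x : E) : ∃ t : ℕ, x ∈ Eann R E t := by
  by_contra hcon
  push_neg at hcon
  -- each m^t • span x is nonzero
  have hnz : ∀ t : ℕ, ((maximalIdeal R) ^ t • Submodule.span R {x} : Submodule R E) ≠ ⊥ := by
    intro t hbot
    obtain ⟨r, hr, hrx⟩ : ∃ r ∈ (maximalIdeal R) ^ t, r • x ≠ 0 := by
      by_contra hc
      push_neg at hc
      exact hcon t hc
    apply hrx
    have : r • x ∈ ((maximalIdeal R) ^ t • Submodule.span R {x} : Submodule R E) :=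
      Submodule.smul_mem_smul hr (Submodule.mem_span_singleton_self x)
    rw [hbot] at this
    simpa using this
  -- range f is contained in any nonzero submodule
  have hrange : ∀ W : Submodule R E, W ⊓ LinearMap.range f ≠ ⊥ → LinearMap.range f ≤ W := by
    intro W hW
    obtain ⟨y, hy, hy0⟩ := Submodule.ne_bot_iff _ |>.mp hW
    obtain ⟨hyW, c, hc⟩ := hy
    rintro z ⟨c', rfl⟩
    have hcne : c ≠ 0 := by
      intro h; apply hy0; rw [← hc, h, map_zero]
    obtain ⟨s, hs⟩ := Ideal.Quotient.mk_surjective (c' * c⁻¹)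
    have hsc : s • c = c' := by
      rw [Algebra.smul_def]
      show residue R s * c = c'
      have hs' : residue R s = c' * c⁻¹ := hs
      rw [hs', mul_assoc, inv_mul_cancel₀ hcne, mul_one]
    have : f c' = s • y := by rw [← hc, ← map_smul, hsc]
    rw [this]
    exact W.smul_mem s hyW
  have hf1 : f 1 ∈ ⨅ t : ℕ, ((maximalIdeal R) ^ t • Submodule.span R {x} : Submodule R E) := by
    rw [Submodule.mem_iInf]
    intro t
    exact hrange _ (hess _ (hnz t)) ⟨1, rfl⟩
  -- Krull intersection on span x
  have hfin : Module.Finite R (Submodule.span R {x} : Submodule R E) :=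
    Module.Finite.iff_fg.mpr (Submodule.fg_span_singleton x)
  have hkrull : (⨅ i : ℕ, (maximalIdeal R) ^ i • (⊤ : Submodule R (Submodule.span R {x} : Submodule R E))) = ⊥ :=
    Ideal.iInf_pow_smul_eq_bot_of_isLocalRing (I := maximalIdeal R)
      (M := (Submodule.span R {x} : Submodule R E)) (IsLocalRing.maximalIdeal.isMaximal R).ne_top
  have hx1 : x ∈ Submodule.span R {x} := Submodule.mem_span_singleton_self x
  have hmem' : ∀ t : ℕ, f 1 ∈ Submodule.map (Submodule.span R {x} : Submodule R E).subtype
      ((maximalIdeal R) ^ t • (⊤ : Submodule R (Submodule.span R {x} : Submodule R E))) := by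
    intro t
    rw [Submodule.map_smul'', Submodule.map_top, Submodule.range_subtype]
    exact (Submodule.mem_iInf _).mp hf1 t
  have hf1span : f 1 ∈ Submodule.span R {x} := by
    obtain ⟨w, _, hw⟩ := hmem' 0
    rw [← hw]; exact w.2
  have hwmem : ∀ t : ℕ, (⟨f 1, hf1span⟩ : Submodule.span R {x}) ∈
      ((maximalIdeal R) ^ t • (⊤ : Submodule R (Submodule.span R {x} : Submodule R E))) := by
    intro t
    obtain ⟨w, hwmem, hw⟩ := hmem' t
    have : w = ⟨f 1, hf1span⟩ := Subtype.ext hw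
    rwa [this] at hwmem
  have : (⟨f 1, hf1span⟩ : Submodule.span R {x}) = 0 := by
    have := Submodule.mem_iInf _ |>.mpr hwmem
    rwa [hkrull, Submodule.mem_bot] at this
  have hf10 : f 1 = 0 := by
    exact congrArg Subtype.val this
  exact one_ne_zero (hf (by rw [hf10, map_zero]) : (1 : ResidueField R) = 0)

/-- Matlis: every endomorphism of E is multiplication by a scalar -/
theorem end_smul [IsNoetherianRing R] [IsAdicComplete (maximalIdeal R) R]
    (hE : Module.Injective R E) (f : ResidueField R →ₗ[R] E)
    (hf : Function.Injective f)
    (hess : ∀ N : Submodule R E, N ≠ ⊥ → N ⊓ LinearMap.range f ≠ ⊥)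
    (g : E →ₗ[R] E) : ∃ r : R, ∀ x : E, g x = r • x := by
  have hsel : ∀ t : ℕ, ∃ r : R, ∀ x : Eann R E t, g x = r • (x : E) := fun t =>
    Et_maps hE f hf hess t (g.comp (Eann R E t).subtype)
  choose rs hrs using hsel
  have hcauchy : ∀ {a b : ℕ}, a ≤ b →
      rs a ≡ rs b [SMOD ((maximalIdeal R) ^ a • ⊤ : Ideal R)] := by
    intro a b hab
    rw [SModEq.sub_mem]
    have hsub : ∀ x : E, x ∈ Eann R E a → (rs a - rs b) • x = 0 := by
      intro x hx
      have h1 : g x = rs a • x := hrs a ⟨x, hx⟩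
      have h2 : g x = rs b • x := hrs b ⟨x, Eann_mono hab hx⟩
      rw [sub_smul, ← h1, ← h2, sub_self]
    have := ann_Eann hE f hf a hsub
    rwa [smul_eq_mul, Ideal.mul_top]
  obtain ⟨r, hr⟩ := IsPrecomplete.prec (IsAdicComplete.toIsPrecomplete (I := maximalIdeal R)) hcauchy
  refine ⟨r, ?_⟩
  intro x
  obtain ⟨t, ht⟩ := torsion_E f hf hess x
  have h1 : g x = rs t • x := hrs t ⟨x, ht⟩
  have h2 : (rs t - r) • x = 0 := by
    have := hr t
    rw [SModEq.sub_mem, smul_eq_mul, Ideal.mul_top] at this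
    exact ht _ this
  rw [h1, ← sub_eq_zero, ← sub_smul, h2]


/-- E itself is Artinian. -/
theorem E_artinian [IsNoetherianRing R] [IsAdicComplete (maximalIdeal R) R]
    (hE : Module.Injective R E) (f : ResidueField R →ₗ[R] E)
    (hf : Function.Injective f)
    (hess : ∀ N : Submodule R E, N ≠ ⊥ → N ⊓ LinearMap.range f ≠ ⊥) :
    IsArtinian R E := by
  rw [← monotone_stabilizes_iff_artinian]
  intro ch
  set A : ℕ →o Ideal R :=
    ⟨fun n => Submodule.annihilator (OrderDual.ofDual (ch n) : Submodule R E), by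
      intro a b hab
      have hle : (OrderDual.ofDual (ch b) : Submodule R E) ≤ OrderDual.ofDual (ch a) :=
        ch.monotone hab
      exact Submodule.annihilator_mono hle⟩ with hA
  obtain ⟨n, hn⟩ := monotone_stabilizes_iff_noetherian.mpr
    (inferInstance : IsNoetherian R R) A
  refine ⟨n, fun m hm => ?_⟩
  have hle : (OrderDual.ofDual (ch m) : Submodule R E) ≤ OrderDual.ofDual (ch n) :=
    ch.monotone hm
  have hAeq : Submodule.annihilator (OrderDual.ofDual (ch n) : Submodule R E) =
      Submodule.annihilator (OrderDual.ofDual (ch m) : Submodule R E) := hn m hm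
  by_contra hne
  have hlt : (OrderDual.ofDual (ch m) : Submodule R E) < OrderDual.ofDual (ch n) :=
    lt_of_le_of_ne hle (fun h => hne (by exact congrArg OrderDual.toDual h.symm))
  obtain ⟨x, hxn, hxm⟩ := SetLike.exists_of_lt hlt
  set Nm := (OrderDual.ofDual (ch m) : Submodule R E) with hNm
  have hxq : (Submodule.Quotient.mk x : E ⧸ Nm) ≠ 0 := by
    rw [Ne, Submodule.Quotient.mk_eq_zero]
    exact hxm
  obtain ⟨ψ, hψ⟩ := cogen hE f hf _ hxq
  set φ : E →ₗ[R] E := ψ.comp Nm.mkQ with hφ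
  obtain ⟨r, hr⟩ := end_smul hE f hf hess φ
  have hrm : r ∈ Submodule.annihilator Nm := by
    rw [Submodule.mem_annihilator]
    intro y hy
    rw [← hr y, hφ, LinearMap.comp_apply, Submodule.mkQ_apply,
      (Submodule.Quotient.mk_eq_zero Nm).mpr hy, map_zero]
  rw [← hAeq, Submodule.mem_annihilator] at hrm
  apply hψ
  show ψ (Nm.mkQ x) = 0
  rw [← LinearMap.comp_apply, ← hφ, hr x, hrm x hxn]

/-- any Artinian module embeds into a finite power of E -/
theorem artinian_embed (hE : Module.Injective R E) (f : ResidueField R →ₗ[R] E)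
    (hf : Function.Injective f) {N : Type u} [AddCommGroup N] [Module R N]
    [IsArtinian R N] :
    ∃ (n : ℕ) (j : N →ₗ[R] (Fin n → E)), Function.Injective j := by
  set S : Set (Submodule R N) :=
    {K | ∃ (n : ℕ) (j : N →ₗ[R] (Fin n → E)), LinearMap.ker j = K} with hS
  have hSne : S.Nonempty := by
    refine ⟨⊤, 0, (0 : N →ₗ[R] (Fin 0 → E)), ?_⟩
    ext y
    simp
  obtain ⟨K, hKS, hKmin⟩ := IsArtinian.set_has_minimal S hSne
  obtain ⟨n, j, hj⟩ := hKS
  by_cases hK : K = ⊥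
  · exact ⟨n, j, LinearMap.ker_eq_bot.mp (hj.trans hK)⟩
  obtain ⟨x, hxK, hx0⟩ := Submodule.ne_bot_iff _ |>.mp hK
  obtain ⟨φ, hφ⟩ := cogen hE f hf x hx0
  set j' : N →ₗ[R] (Fin (n+1) → E) :=
    LinearMap.pi (Fin.cons φ (fun i => (LinearMap.proj i).comp j)) with hj'
  have hker : LinearMap.ker j' = K ⊓ LinearMap.ker φ := by
    rw [hj', LinearMap.ker_pi, ← hj]
    ext y
    simp only [Submodule.mem_iInf, Submodule.mem_inf, LinearMap.mem_ker]
    constructor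
    · intro h
      refine ⟨?_, ?_⟩
      · ext i
        have := h i.succ
        simpa using this
      · have := h 0
        simpa using this
    · rintro ⟨h1, h2⟩ i
      refine Fin.cases ?_ ?_ i
      · simpa using h2
      · intro i'
        simp only [Fin.cons_succ, LinearMap.comp_apply, LinearMap.proj_apply]
        rw [h1]
        rfl
  exfalso
  have hlt : LinearMap.ker j' < K := by
    rw [hker]
    refine lt_of_le_of_ne inf_le_left ?_
    intro h
    have : x ∈ K ⊓ LinearMap.ker φ := by rw [h]; exact hxK
    exact hφ this.2
  exact hKmin _ ⟨n+1, j', hker ▸ rfl⟩ (hker ▸ hlt)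


theorem partA [IsNoetherianRing R] [IsAdicComplete (maximalIdeal R) R]
    (hE : Module.Injective R E) (f : ResidueField R →ₗ[R] E)
    (hf : Function.Injective f)
    (hess : ∀ N : Submodule R E, N ≠ ⊥ → N ⊓ LinearMap.range f ≠ ⊥)
    {M : Type u} [AddCommGroup M] [Module R M] (hfin : Module.Finite R M) :
    IsArtinian R (M →ₗ[R] E) := by
  haveI := E_artinian hE f hf hess
  obtain ⟨n, p, hp⟩ := Module.Finite.exists_fin' R M
  set Φ : (M →ₗ[R] E) →ₗ[R] (Fin n → E) :=
    (LinearEquiv.piRing R E (Fin n) R).toLinearMap.comp (LinearMap.lcomp R E p) with hΦ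
  have hinj : Function.Injective Φ := by
    have h1 : Function.Injective (LinearMap.lcomp R E p) := by
      intro φ ψ h
      ext y
      obtain ⟨z, rfl⟩ := hp y
      exact congrArg (fun (g : (Fin n → R) →ₗ[R] E) => g z) h
    exact (LinearEquiv.piRing R E (Fin n) R).injective.comp h1
  exact isArtinian_of_injective Φ hinj

theorem partB [IsNoetherianRing R] [IsAdicComplete (maximalIdeal R) R]
    (hE : Module.Injective R E) (f : ResidueField R →ₗ[R] E)
    (hf : Function.Injective f)
    (hess : ∀ N : Submodule R E, N ≠ ⊥ → N ⊓ LinearMap.range f ≠ ⊥)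
    {N : Type u} [AddCommGroup N] [Module R N] (hart : IsArtinian R N) :
    Module.Finite R (N →ₗ[R] E) := by
  obtain ⟨n, j, hj⟩ := artinian_embed hE f hf (N := N)
  set v : Fin n → (N →ₗ[R] E) := fun i => (LinearMap.proj i).comp j with hv
  set σ : (Fin n → R) →ₗ[R] (N →ₗ[R] E) :=
    ((LinearEquiv.piRing R (N →ₗ[R] E) (Fin n) R).symm v : (Fin n → R) →ₗ[R] (N →ₗ[R] E)) with hσ
  have hσapp : ∀ g : Fin n → R, σ g = ∑ i, g i • v i := by
    intro g
    rw [hσ]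
    simp
  have hsurj : Function.Surjective σ := by
    intro φ
    obtain ⟨G, hG⟩ := hE.out j hj φ
    have hs : ∀ i, ∃ r : R, ∀ x : E, G (Pi.single i x) = r • x := by
      intro i
      obtain ⟨r, hr⟩ := end_smul hE f hf hess (G.comp (LinearMap.single R (fun _ => E) i))
      exact ⟨r, fun x => by simpa using hr x⟩
    choose rr hrr using hs
    refine ⟨rr, ?_⟩
    ext y
    rw [hσapp]
    rw [LinearMap.sum_apply]
    have h1 : φ y = G (j y) := (hG y).symm
    have h2 : G (j y) = ∑ i, rr i • (j y i) := by
      calc G (j y) = G (∑ i, Pi.single i (j y i)) := by rw [Finset.univ_sum_single]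
        _ = ∑ i, G (Pi.single i (j y i)) := map_sum G _ _
        _ = ∑ i, rr i • (j y i) := Finset.sum_congr rfl fun i _ => hrr i (j y i)
    rw [h1, h2]
    refine Finset.sum_congr rfl fun i _ => ?_
    simp [hv]
  exact Module.Finite.of_surjective σ hsurj

theorem bidual_inj (hE : Module.Injective R E) (f : ResidueField R →ₗ[R] E)
    (hf : Function.Injective f) {M : Type u} [AddCommGroup M] [Module R M] :
    Function.Injective (bidualityMap R M E) := by
  have : ∀ x : M, bidualityMap R M E x = 0 → x = 0 := by
    intro x hx
    by_contra hx0
    obtain ⟨φ, hφ⟩ := cogen hE f hf x hx0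
    apply hφ
    have := congrArg (fun (G : (M →ₗ[R] E) →ₗ[R] E) => G φ) hx
    simpa [bidual_apply] using this
  intro a b hab
  have : bidualityMap R M E (a - b) = 0 := by rw [map_sub, hab, sub_self]
  have := this
  have h := ‹∀ x : M, bidualityMap R M E x = 0 → x = 0› _ this
  exact sub_eq_zero.mp h

theorem partC_fg [IsNoetherianRing R] [IsAdicComplete (maximalIdeal R) R]
    (hE : Module.Injective R E) (f : ResidueField R →ₗ[R] E)
    (hf : Function.Injective f)
    (hess : ∀ N : Submodule R E, N ≠ ⊥ → N ⊓ LinearMap.range f ≠ ⊥)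
    {M : Type u} [AddCommGroup M] [Module R M] (hfin : Module.Finite R M) :
    Function.Surjective (bidualityMap R M E) := by
  intro F
  obtain ⟨n, p, hp⟩ := Module.Finite.exists_fin' R M
  set Dp : (M →ₗ[R] E) →ₗ[R] ((Fin n → R) →ₗ[R] E) := LinearMap.lcomp R E p with hDp
  have hDpinj : Function.Injective Dp := by
    intro φ ψ h
    ext y
    obtain ⟨z, rfl⟩ := hp y
    exact congrArg (fun (g : (Fin n → R) →ₗ[R] E) => g z) h
  obtain ⟨G, hG⟩ := hE.out Dp hDpinj F
  set e := LinearEquiv.piRing R E (Fin n) R with he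
  set G' : (Fin n → E) →ₗ[R] E := G.comp e.symm.toLinearMap with hG'
  have hs : ∀ i, ∃ r : R, ∀ x : E, G' (Pi.single i x) = r • x := by
    intro i
    obtain ⟨r, hr⟩ := end_smul hE f hf hess (G'.comp (LinearMap.single R (fun _ => E) i))
    exact ⟨r, fun x => by simpa using hr x⟩
  choose rr hrr using hs
  refine ⟨∑ i, rr i • p (Pi.single i 1), ?_⟩
  ext φ
  rw [bidual_apply]
  set w : Fin n → E := fun i => φ (p (Pi.single i 1)) with hw
  have h1 : F φ = G (Dp φ) := (hG φ).symm
  have h2 : Dp φ = e.symm w := by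
    apply e.injective
    rw [LinearEquiv.apply_symm_apply]
    ext i
    simp [he, hw, hDp]
  have h3 : G (Dp φ) = G' w := by rw [h2, hG']; rfl
  have h4 : G' w = ∑ i, rr i • w i := by
    calc G' w = G' (∑ i, Pi.single i (w i)) := by rw [Finset.univ_sum_single]
      _ = ∑ i, G' (Pi.single i (w i)) := map_sum G' _ _
      _ = ∑ i, rr i • w i := Finset.sum_congr rfl fun i _ => hrr i (w i)
  have h5 : φ (∑ i, rr i • p (Pi.single i 1)) = ∑ i, rr i • w i := by
    rw [map_sum]
    exact Finset.sum_congr rfl fun i _ => by rw [map_smul]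
  rw [h5, h1, h3, h4]

theorem partC_art [IsNoetherianRing R] [IsAdicComplete (maximalIdeal R) R]
    (hE : Module.Injective R E) (f : ResidueField R →ₗ[R] E)
    (hf : Function.Injective f)
    (hess : ∀ N : Submodule R E, N ≠ ⊥ → N ⊓ LinearMap.range f ≠ ⊥)
    {M : Type u} [AddCommGroup M] [Module R M] (hart : IsArtinian R M) :
    Function.Surjective (bidualityMap R M E) := by
  intro F
  obtain ⟨n, j, hj⟩ := artinian_embed hE f hf (N := M)
  set jj : Fin n → (M →ₗ[R] E) := fun i => (LinearMap.proj i).comp j with hjj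
  set y : Fin n → E := fun i => F (jj i) with hy
  have dec : ∀ G : (Fin n → E) →ₗ[R] E, ∃ s : Fin n → R,
      ∀ w : Fin n → E, G w = ∑ i, s i • w i := by
    intro G
    have hs : ∀ i, ∃ r : R, ∀ x : E, G (Pi.single i x) = r • x := by
      intro i
      obtain ⟨r, hr⟩ := end_smul hE f hf hess (G.comp (LinearMap.single R (fun _ => E) i))
      exact ⟨r, fun x => by simpa using hr x⟩
    choose s hs using hs
    refine ⟨s, fun w => ?_⟩
    calc G w = G (∑ i, Pi.single i (w i)) := by rw [Finset.univ_sum_single]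
      _ = ∑ i, G (Pi.single i (w i)) := map_sum G _ _
      _ = ∑ i, s i • w i := Finset.sum_congr rfl fun i _ => hs i (w i)
  have hex : ∃ x : M, j x = y := by
    by_contra hcon
    push_neg at hcon
    have hyq : (Submodule.Quotient.mk y : (Fin n → E) ⧸ LinearMap.range j) ≠ 0 := by
      rw [Ne, Submodule.Quotient.mk_eq_zero]
      intro hmem
      obtain ⟨x, hx⟩ := hmem
      exact hcon x hx
    obtain ⟨ψb, hψ⟩ := cogen hE f hf _ hyq
    set ψ : (Fin n → E) →ₗ[R] E := ψb.comp (LinearMap.range j).mkQ with hψdef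
    obtain ⟨s, hsdec⟩ := dec ψ
    have hψj : ∀ x : M, ψ (j x) = 0 := by
      intro x
      rw [hψdef, LinearMap.comp_apply, Submodule.mkQ_apply,
        (Submodule.Quotient.mk_eq_zero _).mpr (LinearMap.mem_range_self j x), map_zero]
    have hzero : (∑ i, s i • jj i : M →ₗ[R] E) = 0 := by
      ext x
      rw [LinearMap.sum_apply]
      have : ∑ i, (s i • jj i) x = ∑ i, s i • (j x i) := by
        refine Finset.sum_congr rfl fun i _ => ?_
        simp [hjj]
      rw [this, ← hsdec (j x), hψj x]
      rfl
    have hF0 : F (∑ i, s i • jj i) = 0 := by rw [hzero, map_zero]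
    rw [map_sum] at hF0
    simp only [map_smul] at hF0
    apply hψ
    have : ψ y = ∑ i, s i • y i := hsdec y
    show ψb (Submodule.Quotient.mk y) = 0
    calc ψb (Submodule.Quotient.mk y) = ψ y := rfl
      _ = ∑ i, s i • y i := hsdec y
      _ = ∑ i, s i • F (jj i) := rfl
      _ = 0 := hF0
  obtain ⟨x, hx⟩ := hex
  refine ⟨x, ?_⟩
  ext φ
  rw [bidual_apply]
  obtain ⟨G, hG⟩ := hE.out j hj φ
  obtain ⟨s, hsdec⟩ := dec G
  have hφ : φ = ∑ i, s i • jj i := by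
    ext z
    rw [← hG z, hsdec (j z), LinearMap.sum_apply]
    refine Finset.sum_congr rfl fun i _ => ?_
    simp [hjj]
  rw [hφ, map_sum, LinearMap.sum_apply]
  simp only [map_smul]
  refine Finset.sum_congr rfl fun i _ => ?_
  rw [LinearMap.smul_apply]
  congr 1
  show jj i x = y i
  rw [hjj, hy]
  show j x i = F (jj i)
  rw [hx]
end Matlis


/-- **Matlis duality.** Let `(R, 𝔪, k)` be a commutative noetherian local ring which is
`𝔪`-adically complete and let `E` be an injective hull of `k = R/𝔪` over `R` (an injective
module together with an injective linear map `k → E` with essential image).  Then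
`Hom_R(−, E)` sends finitely generated modules to Artinian modules and Artinian modules to
finitely generated modules, and for every module `M` which is finitely generated or
Artinian the canonical map `M → Hom_R(Hom_R(M, E), E)` is an isomorphism; hence
`Hom_R(−, E)` is a duality between finitely generated and Artinian `R`-modules. -/
theorem stmt13 (R : Type u) [CommRing R] [IsNoetherianRing R] [IsLocalRing R]
    [IsAdicComplete (IsLocalRing.maximalIdeal R) R]
    (E : Type u) [AddCommGroup E] [Module R E] (hE : Module.Injective R E)
    (f : IsLocalRing.ResidueField R →ₗ[R] E) (hf : Function.Injective f)
    (hess : ∀ N : Submodule R E, N ≠ ⊥ → N ⊓ LinearMap.range f ≠ ⊥) :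
    (∀ (M : Type u) [AddCommGroup M] [Module R M],
      Module.Finite R M → IsArtinian R (M →ₗ[R] E)) ∧
    (∀ (N : Type u) [AddCommGroup N] [Module R N],
      IsArtinian R N → Module.Finite R (N →ₗ[R] E)) ∧
    (∀ (M : Type u) [AddCommGroup M] [Module R M],
      (Module.Finite R M ∨ IsArtinian R M) →
        Function.Bijective (bidualityMap R M E)) := by

  refine ⟨fun M _ _ hfin => partA hE f hf hess hfin,
    fun N _ _ hart => partB hE f hf hess hart,
    fun M _ _ h => ⟨bidual_inj hE f hf, ?_⟩⟩
  rcases h with hfin | hart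
  · exact partC_fg hE f hf hess hfin
  · exact partC_art hE f hf hess hart
end
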